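/- Let 2 ≤ p < ∞ and let x_1,…,x_n, y_1,…,y_n ∈ ℓ_p. Then Σ_{i=1}^n Σ_{j=1}^n ( ‖x_i − x_j‖_p^p + ‖y_i − y_j‖_p^p ) ≤ 2^{p−1} · Σ_{i=1}^n Σ_{j=1}^n ‖x_i − y_j‖_p^p. -/

import Mathlib

open scoped ENNReal
open Finset

section scalar

section scalar

variable {p : ℝ}

private lemma real_pm {x y r : ℝ} (hx : 0 ≤ x) (hy : 0 ≤ y) (hr : 1 ≤ r) :
    (x + y) ^ r ≤ 2 ^ (r - 1) * (x ^ r + y ^ r) := by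
  lift x to NNReal using hx
  lift y to NNReal using hy
  have h := NNReal.rpow_add_le_mul_rpow_add_rpow x y hr
  exact_mod_cast h

private lemma real_superadd {x y r : ℝ} (hx : 0 ≤ x) (hy : 0 ≤ y) (hr : 1 ≤ r) :
    x ^ r + y ^ r ≤ (x + y) ^ r := by
  lift x to NNReal using hx
  lift y to NNReal using hy
  have h := NNReal.add_rpow_le_rpow_add x y hr
  exact_mod_cast h

private lemma sq_rpow_half (hp : 2 ≤ p) {x : ℝ} (hx : 0 ≤ x) :
    (x ^ (p / 2)) ^ (2 : ℕ) = x ^ p := by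
  rw [← Real.rpow_natCast (x ^ (p / 2)) 2, ← Real.rpow_mul hx]
  norm_num

/-- scalar reverse Clarkson for `p ≥ 2`. -/
private lemma revClarkson (hp : 2 ≤ p) (s t : ℝ) :
    2 * (|s| ^ p + |t| ^ p) ≤ |s + t| ^ p + |s - t| ^ p := by
  have hr : 1 ≤ p / 2 := by linarith
  have habs : ∀ z : ℝ, |z| ^ p = (z ^ (2:ℕ)) ^ (p / 2) := by
    intro z
    rw [← sq_abs z, ← Real.rpow_natCast |z| 2, ← Real.rpow_mul (abs_nonneg z)]
    congr 1
    ring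
  rw [habs s, habs t, habs (s+t), habs (s-t)]
  have h1 : ((s+t)^(2:ℕ) + (s-t)^(2:ℕ)) ^ (p/2)
      ≤ 2 ^ (p/2 - 1) * (((s+t)^(2:ℕ)) ^ (p/2) + ((s-t)^(2:ℕ)) ^ (p/2)) :=
    real_pm (sq_nonneg _) (sq_nonneg _) hr
  have h2 : (s^(2:ℕ)) ^ (p/2) + (t^(2:ℕ)) ^ (p/2) ≤ (s^(2:ℕ) + t^(2:ℕ)) ^ (p/2) :=
    real_superadd (sq_nonneg _) (sq_nonneg _) hr
  have hid : (s+t)^(2:ℕ) + (s-t)^(2:ℕ) = 2 * (s^(2:ℕ) + t^(2:ℕ)) := by ring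
  rw [hid] at h1
  have h3 : (2 * (s^(2:ℕ) + t^(2:ℕ))) ^ (p/2)
      = 2 ^ (p/2) * (s^(2:ℕ) + t^(2:ℕ)) ^ (p/2) := by
    rw [Real.mul_rpow (by norm_num) (by positivity)]
  rw [h3] at h1
  have h4 : (2:ℝ) ^ (p/2 - 1) = 2 ^ (p/2) / 2 := by
    rw [Real.rpow_sub (by norm_num), Real.rpow_one]
  rw [h4] at h1
  have hpos : (0:ℝ) < 2 ^ (p/2) := Real.rpow_pos_of_pos (by norm_num) _
  nlinarith [h1, h2, hpos]

/-- the signed `p/2` power map -/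
private noncomputable def phi (p s : ℝ) : ℝ :=
  if 0 ≤ s then s ^ (p / 2) else -((-s) ^ (p / 2))

private lemma phi_sq (hp : 2 ≤ p) (s : ℝ) : (phi p s) ^ (2:ℕ) = |s| ^ p := by
  unfold phi
  split_ifs with h
  · rw [sq_rpow_half hp h, abs_of_nonneg h]
  · push_neg at h
    rw [neg_pow, sq_rpow_half hp (by linarith : (0:ℝ) ≤ -s), abs_of_neg h]
    ring_nf

private lemma aux1 (hp : 2 ≤ p) {x y : ℝ} (hy : 0 ≤ y) (hxy : y ≤ x) :
    (x - y) ^ p ≤ 2 ^ (p - 2) * (x ^ (p/2) - y ^ (p/2)) ^ (2:ℕ) := by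
  have hr : 1 ≤ p / 2 := by linarith
  have hxy0 : 0 ≤ x - y := by linarith
  have h1 : (x - y) ^ (p/2) ≤ x ^ (p/2) - y ^ (p/2) := by
    have := real_superadd hy hxy0 hr
    rw [add_sub_cancel] at this
    linarith
  have h2 : ((x - y) ^ (p/2)) ^ (2:ℕ) ≤ (x ^ (p/2) - y ^ (p/2)) ^ (2:ℕ) :=
    pow_le_pow_left₀ (Real.rpow_nonneg hxy0 _) h1 2
  rw [sq_rpow_half hp hxy0] at h2
  have h3 : (1:ℝ) ≤ 2 ^ (p - 2) := by
    rw [show (1:ℝ) = 2 ^ (0:ℝ) by simp]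
    exact Real.rpow_le_rpow_of_exponent_le (by norm_num) (by linarith)
  nlinarith [sq_nonneg (x ^ (p/2) - y ^ (p/2)), h2, h3]

private lemma aux2 (hp : 2 ≤ p) {a b : ℝ} (ha : 0 ≤ a) (hb : 0 ≤ b) :
    (a + b) ^ p ≤ 2 ^ (p - 2) * (a ^ (p/2) + b ^ (p/2)) ^ (2:ℕ) := by
  have hr : 1 ≤ p / 2 := by linarith
  have h1 : (a + b) ^ (p/2) ≤ 2 ^ (p/2 - 1) * (a ^ (p/2) + b ^ (p/2)) :=
    real_pm ha hb hr
  have h2 : ((a+b) ^ (p/2)) ^ (2:ℕ) ≤ (2 ^ (p/2 - 1) * (a ^ (p/2) + b ^ (p/2))) ^ (2:ℕ) :=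
    pow_le_pow_left₀ (Real.rpow_nonneg (by linarith) _) h1 2
  rw [sq_rpow_half hp (by linarith : (0:ℝ) ≤ a + b)] at h2
  have h3 : ((2:ℝ) ^ (p/2 - 1)) ^ (2:ℕ) = 2 ^ (p - 2) := by
    rw [← Real.rpow_natCast ((2:ℝ) ^ (p/2-1)) 2, ← Real.rpow_mul (by norm_num : (0:ℝ) ≤ 2)]
    norm_num
    ring_nf
  calc (a + b) ^ p ≤ (2 ^ (p/2 - 1) * (a ^ (p/2) + b ^ (p/2))) ^ (2:ℕ) := h2
    _ = ((2:ℝ) ^ (p/2 - 1)) ^ (2:ℕ) * (a ^ (p/2) + b ^ (p/2)) ^ (2:ℕ) := by ring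
    _ = 2 ^ (p - 2) * (a ^ (p/2) + b ^ (p/2)) ^ (2:ℕ) := by rw [h3]

/-- Mazur-map comparison, pointwise. -/
private lemma mazur (hp : 2 ≤ p) (s t : ℝ) :
    |s - t| ^ p ≤ 2 ^ (p - 2) * (phi p s - phi p t) ^ (2:ℕ) := by
  have main : ∀ s t : ℝ, t ≤ s → |s - t| ^ p ≤ 2 ^ (p - 2) * (phi p s - phi p t) ^ (2:ℕ) := by
    intro s t hts
    have hst0 : 0 ≤ s - t := by linarith
    rw [abs_of_nonneg hst0]
    by_cases ht : 0 ≤ t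
    · -- both nonneg
      have hs : 0 ≤ s := le_trans ht hts
      have := aux1 hp ht hts
      simpa [phi, hs, ht] using this
    · push_neg at ht
      by_cases hs : 0 ≤ s
      · -- opposite signs
        have h := aux2 hp hs (by linarith : (0:ℝ) ≤ -t)
        have e1 : s - t = s + (-t) := by ring
        have e2 : phi p s - phi p t = s ^ (p/2) + (-t) ^ (p/2) := by
          simp [phi, hs, not_le.mpr ht]
        rw [e1, e2]
        exact h
      · -- both negative
        push_neg at hs
        have h := aux1 hp (by linarith : (0:ℝ) ≤ -s) (by linarith : -s ≤ -t)
        have e1 : s - t = -t - -s := by ring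
        have e2 : phi p s - phi p t = (-t) ^ (p/2) - (-s) ^ (p/2) := by
          simp [phi, not_le.mpr hs, not_le.mpr ht]
          ring
        rw [e1, e2]
        exact h
  rcases le_total t s with h | h
  · exact main s t h
  · have := main t s h
    rw [abs_sub_comm] at this
    have e : (phi p t - phi p s) ^ (2:ℕ) = (phi p s - phi p t) ^ (2:ℕ) := by ring
    rwa [e] at this


private lemma sum_sq_expand {ι : Type*} [Fintype ι] (v : ι → ℝ) :
    ∑ α : ι, ∑ β : ι, (v α - v β) ^ (2:ℕ)
      ≤ 2 * (Fintype.card ι : ℝ) * ∑ α : ι, (v α) ^ (2:ℕ) := by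
  have expand : ∑ α : ι, ∑ β : ι, (v α - v β) ^ (2:ℕ)
      = (Fintype.card ι : ℝ) * ∑ α : ι, (v α) ^ (2:ℕ)
        + (Fintype.card ι : ℝ) * ∑ α : ι, (v α) ^ (2:ℕ)
        - 2 * (∑ α : ι, v α) * (∑ α : ι, v α) := by
    have h : ∀ α : ι, ∑ β : ι, (v α - v β) ^ (2:ℕ)
        = (Fintype.card ι : ℝ) * (v α)^(2:ℕ) - 2 * v α * (∑ β : ι, v β)
          + ∑ β : ι, (v β)^(2:ℕ) := by
      intro α
      have : ∀ β : ι, (v α - v β) ^ (2:ℕ) = (v α)^(2:ℕ) - 2 * v α * v β + (v β)^(2:ℕ) := by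
        intro β; ring
      rw [Finset.sum_congr rfl (fun β _ => this β)]
      rw [Finset.sum_add_distrib, Finset.sum_sub_distrib, Finset.sum_const,
        Finset.card_univ, ← Finset.mul_sum]
      push_cast
      ring
    rw [Finset.sum_congr rfl (fun α _ => h α)]
    rw [Finset.sum_add_distrib, Finset.sum_sub_distrib, ← Finset.sum_mul, Finset.sum_const,
      Finset.card_univ, ← Finset.mul_sum]
    simp only [← Finset.mul_sum]
    push_cast
    ring
  nlinarith [mul_self_nonneg (∑ α : ι, v α)]

/-- key lemma -/
private lemma L3 {ι : Type*} [Fintype ι] (hp : 2 ≤ p) (u : ι → ℝ) :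
    ∑ α : ι, ∑ β : ι, |u α - u β| ^ p
      ≤ 2 ^ (p - 1) * (Fintype.card ι : ℝ) * ∑ α : ι, |u α| ^ p := by
  have step1 : ∑ α : ι, ∑ β : ι, |u α - u β| ^ p
      ≤ 2 ^ (p - 2) * ∑ α : ι, ∑ β : ι, (phi p (u α) - phi p (u β)) ^ (2:ℕ) := by
    rw [Finset.mul_sum]
    refine Finset.sum_le_sum fun α _ => ?_
    rw [Finset.mul_sum]
    exact Finset.sum_le_sum fun β _ => mazur hp (u α) (u β)
  have step2 : ∑ α : ι, ∑ β : ι, (phi p (u α) - phi p (u β)) ^ (2:ℕ)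
      ≤ 2 * (Fintype.card ι : ℝ) * ∑ α : ι, (phi p (u α)) ^ (2:ℕ) :=
    sum_sq_expand _
  have step3 : ∑ α : ι, (phi p (u α)) ^ (2:ℕ) = ∑ α : ι, |u α| ^ p :=
    Finset.sum_congr rfl fun α _ => phi_sq hp (u α)
  rw [step3] at step2
  have h2 : (0:ℝ) ≤ 2 ^ (p - 2) := le_of_lt (Real.rpow_pos_of_pos (by norm_num) _)
  have key : (2:ℝ) ^ (p-2) * (2 * (Fintype.card ι : ℝ) * ∑ α : ι, |u α| ^ p)
      = 2 ^ (p-1) * (Fintype.card ι : ℝ) * ∑ α : ι, |u α| ^ p := by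
    have : (2:ℝ) ^ (p-1) = 2 ^ (p-2) * 2 := by
      rw [← Real.rpow_add_one (by norm_num : (2:ℝ) ≠ 0) (p-2)]
      norm_num
      ring
    rw [this]; ring
  calc ∑ α : ι, ∑ β : ι, |u α - u β| ^ p
      ≤ 2 ^ (p - 2) * ∑ α : ι, ∑ β : ι, (phi p (u α) - phi p (u β)) ^ (2:ℕ) := step1
    _ ≤ 2 ^ (p-2) * (2 * (Fintype.card ι : ℝ) * ∑ α : ι, |u α| ^ p) := by
        exact mul_le_mul_of_nonneg_left step2 h2
    _ = _ := key

private lemma scalar_main (hp : 2 ≤ p) (n : ℕ) (a b : Fin n → ℝ) :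
    (∑ i, ∑ j, (|a i - a j| ^ p + |b i - b j| ^ p))
      ≤ 2 ^ (p - 1) * ∑ i, ∑ j, |a i - b j| ^ p := by
  rcases Nat.eq_zero_or_pos n with rfl | hn
  · simp
  have csum : ∀ C : ℝ, (∑ _i : Fin n, ∑ _j : Fin n, C) = (n:ℝ)^(2:ℕ) * C := by
    intro C
    simp [Finset.sum_const, Finset.card_univ, Fintype.card_fin, nsmul_eq_mul]
    ring
  set u : Fin n × Fin n → ℝ := fun z => a z.1 - b z.2 with hu
  set T : ℝ := ∑ α : Fin n × Fin n, ∑ β : Fin n × Fin n, |u α - u β| ^ p with hT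
  set Sa : ℝ := ∑ i, ∑ j, |a i - a j| ^ p with hSa
  set Sb : ℝ := ∑ i, ∑ j, |b i - b j| ^ p with hSb
  -- T in 4-nested form
  have hT4 : T = ∑ i, ∑ j, ∑ k, ∑ l, |(a i - a j) + (b k - b l)| ^ p := by
    rw [hT, Fintype.sum_prod_type]
    have inner : ∀ i : Fin n, ∀ l : Fin n,
        (∑ β : Fin n × Fin n, |u (i, l) - u β| ^ p)
          = ∑ j, ∑ k, |(a i - a j) + (b k - b l)| ^ p := by
      intro i l
      rw [Fintype.sum_prod_type]
      refine Finset.sum_congr rfl fun j _ => ?_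
      refine Finset.sum_congr rfl fun k _ => ?_
      have : u (i, l) - u (j, k) = (a i - a j) + (b k - b l) := by
        simp only [hu]; ring
      rw [this]
    calc ∑ i, ∑ l, (∑ β : Fin n × Fin n, |u (i, l) - u β| ^ p)
        = ∑ i, ∑ l, ∑ j, ∑ k, |(a i - a j) + (b k - b l)| ^ p := by
          exact Finset.sum_congr rfl fun i _ => Finset.sum_congr rfl fun l _ => inner i l
      _ = ∑ i, ∑ j, ∑ k, ∑ l, |(a i - a j) + (b k - b l)| ^ p := by
          refine Finset.sum_congr rfl fun i _ => ?_
          rw [Finset.sum_comm]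
          refine Finset.sum_congr rfl fun j _ => ?_
          rw [Finset.sum_comm]
  -- swapped version
  have hT4' : T = ∑ i, ∑ j, ∑ k, ∑ l, |(a i - a j) - (b k - b l)| ^ p := by
    rw [hT4]
    refine Finset.sum_congr rfl fun i _ => ?_
    refine Finset.sum_congr rfl fun j _ => ?_
    rw [Finset.sum_comm]
    refine Finset.sum_congr rfl fun k _ => ?_
    refine Finset.sum_congr rfl fun l _ => ?_
    have : (a i - a j) + (b l - b k) = (a i - a j) - (b k - b l) := by ring
    rw [this]
  -- lower bound for 2T
  have key1 : 2 * ((n:ℝ)^(2:ℕ) * (Sa + Sb)) ≤ 2 * T := by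
    have expand : 2 * T = ∑ i, ∑ j, ∑ k, ∑ l,
        (|(a i - a j) + (b k - b l)| ^ p + |(a i - a j) - (b k - b l)| ^ p) := by
      rw [two_mul]
      nth_rewrite 1 [hT4]
      nth_rewrite 1 [hT4']
      simp only [← Finset.sum_add_distrib]
    rw [expand]
    have lhs_eq : 2 * ((n:ℝ)^(2:ℕ) * (Sa + Sb))
        = ∑ i, ∑ j, ∑ k, ∑ l, (2 * |a i - a j| ^ p + 2 * |b k - b l| ^ p) := by
      have inner2 : ∀ i j : Fin n,
          (∑ k, ∑ l, (2 * |a i - a j| ^ p + 2 * |b k - b l| ^ p))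
            = (n:ℝ)^(2:ℕ) * (2 * |a i - a j| ^ p) + 2 * Sb := by
        intro i j
        rw [show (∑ k, ∑ l, (2 * |a i - a j| ^ p + 2 * |b k - b l| ^ p))
            = (∑ _k : Fin n, ∑ _l : Fin n, 2 * |a i - a j| ^ p)
              + ∑ k, ∑ l, 2 * |b k - b l| ^ p by
          simp only [Finset.sum_add_distrib]]
        rw [csum (2 * |a i - a j| ^ p)]
        congr 1
        simp only [← Finset.mul_sum]
        rw [hSb]
      rw [show (∑ i, ∑ j, ∑ k, ∑ l, (2 * |a i - a j| ^ p + 2 * |b k - b l| ^ p))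
          = ∑ i, ∑ j, ((n:ℝ)^(2:ℕ) * (2 * |a i - a j| ^ p) + 2 * Sb) by
        exact Finset.sum_congr rfl fun i _ => Finset.sum_congr rfl fun j _ => inner2 i j]
      rw [show (∑ i, ∑ j, ((n:ℝ)^(2:ℕ) * (2 * |a i - a j| ^ p) + 2 * Sb))
          = (∑ i, ∑ j, ((n:ℝ)^(2:ℕ) * (2 * |a i - a j| ^ p)))
            + ∑ _i : Fin n, ∑ _j : Fin n, (2 * Sb) by
        simp only [Finset.sum_add_distrib]]
      rw [csum (2 * Sb)]
      simp only [← Finset.mul_sum]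
      rw [← hSa]
      ring
    rw [lhs_eq]
    refine Finset.sum_le_sum fun i _ => ?_
    refine Finset.sum_le_sum fun j _ => ?_
    refine Finset.sum_le_sum fun k _ => ?_
    refine Finset.sum_le_sum fun l _ => ?_
    have h := revClarkson hp (a i - a j) (b k - b l)
    linarith
  have key2 : T ≤ (n:ℝ)^(2:ℕ) * (2 ^ (p - 1) * ∑ i, ∑ j, |a i - b j| ^ p) := by
    have h := L3 (ι := Fin n × Fin n) hp u
    rw [← hT] at h
    have hcard : ((Fintype.card (Fin n × Fin n)) : ℝ) = (n:ℝ)^(2:ℕ) := by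
      simp [Fintype.card_prod, Fintype.card_fin]
      ring
    have hsum : ∑ α : Fin n × Fin n, |u α| ^ p = ∑ i, ∑ j, |a i - b j| ^ p := by
      rw [Fintype.sum_prod_type]
    rw [hcard, hsum] at h
    calc T ≤ 2 ^ (p-1) * (n:ℝ)^(2:ℕ) * ∑ i, ∑ j, |a i - b j| ^ p := h
      _ = _ := by ring
  have hn2 : (0:ℝ) < (n:ℝ)^(2:ℕ) := by positivity
  have hmain : (n:ℝ)^(2:ℕ) * (Sa + Sb) ≤ (n:ℝ)^(2:ℕ) * (2 ^ (p - 1) * ∑ i, ∑ j, |a i - b j| ^ p) := by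
    have h1 : (n:ℝ)^(2:ℕ) * (Sa + Sb) ≤ T := by linarith
    linarith
  have := (mul_le_mul_iff_right₀ hn2).mp hmain
  calc (∑ i, ∑ j, (|a i - a j| ^ p + |b i - b j| ^ p)) = Sa + Sb := by
        rw [hSa, hSb, ← Finset.sum_add_distrib]
        exact Finset.sum_congr rfl fun i _ => by rw [← Finset.sum_add_distrib]
    _ ≤ 2 ^ (p - 1) * ∑ i, ∑ j, |a i - b j| ^ p := this

end scalar

/-- For `2 ≤ p < ∞` and `x₁,…,xₙ, y₁,…,yₙ ∈ ℓ_p`: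
`Σᵢⱼ (‖xᵢ − xⱼ‖^p + ‖yᵢ − yⱼ‖^p) ≤ 2^{p−1}·Σᵢⱼ ‖xᵢ − yⱼ‖^p`. -/
theorem stmt9 (p : ℝ) (hp : 2 ≤ p) (n : ℕ)
    (x y : Fin n → lp (fun _ : ℕ => ℝ) (ENNReal.ofReal p)) :
    ∑ i, ∑ j, (‖x i - x j‖ ^ p + ‖y i - y j‖ ^ p) ≤
      (2 : ℝ) ^ (p - 1) * ∑ i, ∑ j, ‖x i - y j‖ ^ p := by
  have hPr : (ENNReal.ofReal p).toReal = p := ENNReal.toReal_ofReal (by linarith)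
  have hP0 : 0 < (ENNReal.ofReal p).toReal := by rw [hPr]; linarith
  have hnorm : ∀ f g : lp (fun _ : ℕ => ℝ) (ENNReal.ofReal p),
      ‖f - g‖ ^ p = ∑' k, |(f : ∀ _ : ℕ, ℝ) k - (g : ∀ _ : ℕ, ℝ) k| ^ p := by
    intro f g
    have h := lp.norm_rpow_eq_tsum hP0 (f - g)
    rw [hPr] at h
    rw [h]
    refine tsum_congr fun k => ?_
    rw [lp.coeFn_sub, Pi.sub_apply, Real.norm_eq_abs]
  have hsumm : ∀ f g : lp (fun _ : ℕ => ℝ) (ENNReal.ofReal p),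
      Summable (fun k => |(f : ∀ _ : ℕ, ℝ) k - (g : ∀ _ : ℕ, ℝ) k| ^ p) := by
    intro f g
    have h := (lp.memℓp (f - g)).summable hP0
    rw [hPr] at h
    have e : (fun k => ‖(f - g : lp (fun _ : ℕ => ℝ) (ENNReal.ofReal p)) k‖ ^ p)
        = fun k => |(f : ∀ _ : ℕ, ℝ) k - (g : ∀ _ : ℕ, ℝ) k| ^ p := by
      funext k
      rw [lp.coeFn_sub, Pi.sub_apply, Real.norm_eq_abs]
    rwa [e] at h
  have lhs_eq : ∑ i, ∑ j, (‖x i - x j‖ ^ p + ‖y i - y j‖ ^ p)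
      = ∑' k, ∑ i, ∑ j, (|(x i : ∀ _ : ℕ, ℝ) k - (x j : ∀ _ : ℕ, ℝ) k| ^ p
          + |(y i : ∀ _ : ℕ, ℝ) k - (y j : ∀ _ : ℕ, ℝ) k| ^ p) := by
    rw [eq_comm]
    rw [Summable.tsum_finsetSum (fun i _ => summable_sum
      (fun j _ => (hsumm (x i) (x j)).add (hsumm (y i) (y j))))]
    refine Finset.sum_congr rfl fun i _ => ?_
    rw [Summable.tsum_finsetSum (fun j _ => (hsumm (x i) (x j)).add (hsumm (y i) (y j)))]
    refine Finset.sum_congr rfl fun j _ => ?_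
    rw [Summable.tsum_add (hsumm (x i) (x j)) (hsumm (y i) (y j))]
    rw [hnorm (x i) (x j), hnorm (y i) (y j)]
  have rhs_eq : (2:ℝ) ^ (p - 1) * ∑ i, ∑ j, ‖x i - y j‖ ^ p
      = ∑' k, (2:ℝ) ^ (p-1) * ∑ i, ∑ j, |(x i : ∀ _ : ℕ, ℝ) k - (y j : ∀ _ : ℕ, ℝ) k| ^ p := by
    rw [tsum_mul_left]
    congr 1
    rw [eq_comm]
    rw [Summable.tsum_finsetSum (fun i _ => summable_sum (fun j _ => hsumm (x i) (y j)))]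
    refine Finset.sum_congr rfl fun i _ => ?_
    rw [Summable.tsum_finsetSum (fun j _ => hsumm (x i) (y j))]
    exact Finset.sum_congr rfl fun j _ => (hnorm (x i) (y j)).symm
  rw [lhs_eq, rhs_eq]
  refine Summable.tsum_le_tsum ?_ ?_ ?_
  · intro k
    exact scalar_main hp n (fun i => (x i : ∀ _ : ℕ, ℝ) k) (fun i => (y i : ∀ _ : ℕ, ℝ) k)
  · exact summable_sum (fun i _ => summable_sum
      (fun j _ => (hsumm (x i) (x j)).add (hsumm (y i) (y j))))
  · exact Summable.mul_left _
      (summable_sum (fun i _ => summable_sum (fun j _ => hsumm (x i) (y j))))
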